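/- Let x, y, z be nonzero vectors in ℝ², let θ = arccos(⟨x,y⟩/(|x||y|)) and θ' = arccos(⟨z,y⟩/(|z||y|)). If θ + θ' ≥ π, then |x − y| + |y − z| ≥ |x| + |z|. -/

import Mathlib

open Real

theorem stmt_0 (x y z : EuclideanSpace ℝ (Fin 2))
    (hx : x ≠ 0) (hy : y ≠ 0) (hz : z ≠ 0)
    (h : Real.arccos ((inner ℝ x y : ℝ) / (‖x‖ * ‖y‖))
        + Real.arccos ((inner ℝ z y : ℝ) / (‖z‖ * ‖y‖)) ≥ π) :
    ‖x - y‖ + ‖y - z‖ ≥ ‖x‖ + ‖z‖ := by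
  have hnx : (0:ℝ) < ‖x‖ := norm_pos_iff.mpr hx
  have hny : (0:ℝ) < ‖y‖ := norm_pos_iff.mpr hy
  have hnz : (0:ℝ) < ‖z‖ := norm_pos_iff.mpr hz
  set a : ℝ := (inner ℝ x y : ℝ) / (‖x‖ * ‖y‖) with ha
  set b : ℝ := (inner ℝ z y : ℝ) / (‖z‖ * ‖y‖) with hb
  have hxy := abs_le.mp (abs_real_inner_le_norm x y)
  have hzy := abs_le.mp (abs_real_inner_le_norm z y)
  have ha1 : -1 ≤ a := by
    rw [ha, le_div_iff₀ (by positivity)]; linarith [hxy.1]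
  have ha2 : a ≤ 1 := by
    rw [ha, div_le_one (by positivity)]; exact hxy.2
  have hb1 : -1 ≤ b := by
    rw [hb, le_div_iff₀ (by positivity)]; linarith [hzy.1]
  have hb2 : b ≤ 1 := by
    rw [hb, div_le_one (by positivity)]; exact hzy.2
  -- from the angle condition: a + b ≤ 0
  have hle : π - Real.arccos b ≤ Real.arccos a := by linarith
  have hcos : Real.cos (Real.arccos a) ≤ Real.cos (π - Real.arccos b) := by
    apply Real.cos_le_cos_of_nonneg_of_le_pi
    · linarith [Real.arccos_le_pi b]
    · exact Real.arccos_le_pi a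
    · exact hle
  rw [Real.cos_arccos ha1 ha2, Real.cos_pi_sub, Real.cos_arccos hb1 hb2] at hcos
  -- Cauchy–Schwarz bounds
  have c1 : ‖x‖^2 - (inner ℝ x y : ℝ) ≤ ‖x‖ * ‖x - y‖ := by
    have := real_inner_le_norm x (x - y)
    rw [inner_sub_right, real_inner_self_eq_norm_sq] at this
    linarith
  have c2 : ‖z‖^2 - (inner ℝ z y : ℝ) ≤ ‖z‖ * ‖y - z‖ := by
    have := real_inner_le_norm z (z - y)
    rw [inner_sub_right, real_inner_self_eq_norm_sq, ← neg_sub y z, norm_neg] at this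
    linarith
  have hxa : (inner ℝ x y : ℝ) = a * (‖x‖ * ‖y‖) := by
    rw [ha]; field_simp
  have hzb : (inner ℝ z y : ℝ) = b * (‖z‖ * ‖y‖) := by
    rw [hb]; field_simp
  rw [hxa] at c1
  rw [hzb] at c2
  have d1 : ‖x‖ - a * ‖y‖ ≤ ‖x - y‖ := by
    rw [← mul_le_mul_iff_right₀ hnx]; nlinarith
  have d2 : ‖z‖ - b * ‖y‖ ≤ ‖y - z‖ := by
    rw [← mul_le_mul_iff_right₀ hnz]; nlinarith
  nlinarith [mul_nonneg hny.le (neg_nonneg.mpr (by linarith : a + b ≤ 0))]
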